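/- Discrete Morrey inequality: Let d ≥ 1 and let p be a real number with p > d. Then there exists a constant C = C(d,p) such that for every integer n ≥ 1, every f : ℤ^d → ℝ and all x, y ∈ B_n: |f(x) − f(y)| ≤ C·n^{1−d/p}·‖∇f‖_p. -/

import Mathlib

/-- Points of the lattice `ℤ^d`. -/
abbrev LatticePt (d : ℕ) := Fin d → ℤ

/-- The cube `B_n = [0,n]^d ∩ ℤ^d`. -/
noncomputable def cube (d n : ℕ) : Finset (LatticePt d) :=
  Fintype.piFinset fun _ => Finset.Icc (0 : ℤ) (n : ℤ)

/-- `|∇f(x)| = (Σᵢ (f(x+eᵢ) − f(x))²)^{1/2}`. -/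
noncomputable def gradLen {d : ℕ} (f : LatticePt d → ℝ) (x : LatticePt d) : ℝ :=
  Real.sqrt (∑ i, (f (x + Pi.single i 1) - f x) ^ 2)

/-- `‖∇f‖_p = (Σ_{x ∈ B_n} |∇f(x)|^p)^{1/p}`. -/
noncomputable def lpGradNorm (d n : ℕ) (p : ℝ) (f : LatticePt d → ℝ) : ℝ :=
  (∑ x ∈ cube d n, gradLen f x ^ p) ^ (1 / p)

/-! ### Auxiliary definitions -/

/-- subcube with corner `c` and side `m` -/
noncomputable def subcube (d : ℕ) (c : LatticePt d) (m : ℕ) : Finset (LatticePt d) :=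
  Fintype.piFinset fun i => Finset.Icc (c i) (c i + (m : ℤ))

lemma mem_subcube {d : ℕ} {c x : LatticePt d} {m : ℕ} :
    x ∈ subcube d c m ↔ ∀ i, c i ≤ x i ∧ x i ≤ c i + (m : ℤ) := by
  simp [subcube, Fintype.mem_piFinset, Finset.mem_Icc]

lemma cube_eq_subcube {d n : ℕ} : cube d n = subcube d 0 n := by
  simp [cube, subcube]

lemma gradLen_nonneg {d : ℕ} (f : LatticePt d → ℝ) (x : LatticePt d) : 0 ≤ gradLen f x :=
  Real.sqrt_nonneg _

lemma card_subcube {d : ℕ} (c : LatticePt d) (m : ℕ) :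
    (subcube d c m).card = (m + 1) ^ d := by
  rw [subcube, Fintype.card_piFinset]
  have : ∀ i : Fin d, (Finset.Icc (c i) (c i + (m : ℤ))).card = m + 1 := by
    intro i; rw [Int.card_Icc]; omega
  simp [this]

lemma subcube_nonempty {d : ℕ} (c : LatticePt d) (m : ℕ) : (subcube d c m).Nonempty :=
  ⟨c, mem_subcube.2 fun i => ⟨le_refl _, le_add_of_nonneg_right (by positivity)⟩⟩

lemma abs_diff_le_gradLen {d : ℕ} (f : LatticePt d → ℝ) (x : LatticePt d) (i : Fin d) :
    |f (x + Pi.single i 1) - f x| ≤ gradLen f x := by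
  unfold gradLen
  refine le_trans (le_of_eq (Real.sqrt_sq_eq_abs _).symm) (Real.sqrt_le_sqrt ?_)
  exact Finset.single_le_sum (f := fun j : Fin d => (f (x + Pi.single j 1) - f x) ^ 2)
    (fun j _ => sq_nonneg _) (Finset.mem_univ i)

lemma update_add_single {d : ℕ} (u : LatticePt d) (i : Fin d) (r : ℤ) :
    Function.update u i r + Pi.single i 1 = Function.update u i (r + 1) := by
  funext j
  rcases eq_or_ne j i with rfl | hj
  · simp
  · simp [Function.update_of_ne hj, Pi.single_eq_of_ne hj]

lemma path1D {d : ℕ} (f : LatticePt d → ℝ) (u : LatticePt d) (i : Fin d) {s : ℤ} :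
    ∀ t : ℤ, s ≤ t →
      |f (Function.update u i s) - f (Function.update u i t)| ≤
        ∑ r ∈ Finset.Ico s t, gradLen f (Function.update u i r) := by
  refine Int.le_induction ?_ ?_
  · simp
  · intro t ht ih
    have hIco : Finset.Ico s (t + 1) = insert t (Finset.Ico s t) := by
      ext r; simp only [Finset.mem_Ico, Finset.mem_insert]; omega
    have hnot : t ∉ Finset.Ico s t := by simp
    rw [hIco, Finset.sum_insert hnot]
    have h1 : |f (Function.update u i t) - f (Function.update u i (t + 1))| ≤
        gradLen f (Function.update u i t) := by
      rw [← update_add_single, abs_sub_comm]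
      exact abs_diff_le_gradLen f _ i
    calc |f (Function.update u i s) - f (Function.update u i (t + 1))|
        ≤ |f (Function.update u i s) - f (Function.update u i t)| +
          |f (Function.update u i t) - f (Function.update u i (t + 1))| := abs_sub_le _ _ _
      _ ≤ (∑ r ∈ Finset.Ico s t, gradLen f (Function.update u i r)) +
          gradLen f (Function.update u i t) := add_le_add ih h1
      _ = _ := by ring

lemma step1D {d : ℕ} (f : LatticePt d → ℝ) (u : LatticePt d) (i : Fin d) (L : ℤ) (m : ℕ)
    {s t : ℤ} (hs : L ≤ s ∧ s ≤ L + (m : ℤ)) (ht : L ≤ t ∧ t ≤ L + (m : ℤ)) :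
    |f (Function.update u i s) - f (Function.update u i t)| ≤
      ∑ r ∈ Finset.Icc L (L + (m : ℤ)), gradLen f (Function.update u i r) := by
  have key : ∀ s t : ℤ, s ≤ t → L ≤ s → t ≤ L + (m : ℤ) →
      |f (Function.update u i s) - f (Function.update u i t)| ≤
        ∑ r ∈ Finset.Icc L (L + (m : ℤ)), gradLen f (Function.update u i r) := by
    intro s t hst hLs htm
    refine (path1D f u i t hst).trans ?_
    refine Finset.sum_le_sum_of_subset_of_nonneg ?_ (fun r _ _ => gradLen_nonneg f _)
    intro r hr
    simp only [Finset.mem_Ico, Finset.mem_Icc] at hr ⊢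
    omega
  rcases le_total s t with h | h
  · exact key s t h hs.1 ht.2
  · rw [abs_sub_comm]; exact key t s h ht.1 hs.2

/-! ### Hybrid points and path telescoping -/

def hyb {d : ℕ} (k : ℕ) (a b : LatticePt d) : LatticePt d :=
  fun j => if (j : ℕ) < k then b j else a j

lemma hyb_zero {d : ℕ} (a b : LatticePt d) : hyb 0 a b = a := by
  funext j; simp [hyb]

lemma hyb_last {d : ℕ} (a b : LatticePt d) : hyb d a b = b := by
  funext j; simp [hyb, j.isLt]

lemma hyb_mem {d : ℕ} {Q : Finset (LatticePt d)} {c : LatticePt d} {m : ℕ}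
    (hQ : Q = subcube d c m) {a b : LatticePt d} (ha : a ∈ Q) (hb : b ∈ Q) (k : ℕ) :
    hyb k a b ∈ Q := by
  subst hQ
  rw [mem_subcube] at ha hb ⊢
  intro i
  by_cases h : (i : ℕ) < k <;> simp [hyb, h, ha i, hb i]

lemma hyb_hyb_left {d : ℕ} (k : ℕ) (a b : LatticePt d) :
    hyb k (hyb k a b) (hyb k b a) = a := by
  funext j; by_cases h : (j : ℕ) < k <;> simp [hyb, h]

lemma hyb_succ {d : ℕ} (k : ℕ) (hk : k < d) (a b : LatticePt d) :
    hyb (k + 1) a b = Function.update (hyb k a b) ⟨k, hk⟩ (b ⟨k, hk⟩) := by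
  funext j
  rcases eq_or_ne j ⟨k, hk⟩ with rfl | hj
  · simp [hyb]
  · have hjk : (j : ℕ) ≠ k := fun h => hj (Fin.ext h)
    have : ((j : ℕ) < k + 1) = ((j : ℕ) < k) := by rw [eq_iff_iff]; omega
    simp [hyb, Function.update_of_ne hj, this]

lemma hyb_coord {d : ℕ} (k : ℕ) (hk : k < d) (a b : LatticePt d) :
    hyb k a b ⟨k, hk⟩ = a ⟨k, hk⟩ := by simp [hyb]

lemma telescope {d : ℕ} (f : LatticePt d → ℝ) (a b : LatticePt d) :
    |f a - f b| ≤ ∑ k ∈ Finset.range d, |f (hyb k a b) - f (hyb (k + 1) a b)| := by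
  have h := Finset.sum_range_sub' (fun k => f (hyb k a b)) d
  calc |f a - f b| = |∑ k ∈ Finset.range d, (f (hyb k a b) - f (hyb (k + 1) a b))| := by
        rw [h, hyb_zero, hyb_last]
    _ ≤ _ := Finset.abs_sum_le_sum_abs _ _

/-! ### Counting identities -/

lemma sum_hyb {d : ℕ} (c : LatticePt d) (m : ℕ) (k : ℕ) (Φ : LatticePt d → ℝ) :
    ∑ a ∈ subcube d c m, ∑ b ∈ subcube d c m, Φ (hyb k a b) =
      ((subcube d c m).card : ℝ) * ∑ a ∈ subcube d c m, Φ a := by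
  set Q := subcube d c m with hQ
  rw [← Finset.sum_product']
  have key : ∑ x ∈ Q ×ˢ Q, Φ (hyb k x.1 x.2) = ∑ y ∈ Q ×ˢ Q, Φ y.1 := by
    refine Finset.sum_nbij' (i := fun x => (hyb k x.1 x.2, hyb k x.2 x.1))
      (j := fun x => (hyb k x.1 x.2, hyb k x.2 x.1)) ?_ ?_ ?_ ?_ ?_
    · intro x hx
      simp only [Finset.mem_product] at hx ⊢
      exact ⟨hyb_mem hQ hx.1 hx.2 k, hyb_mem hQ hx.2 hx.1 k⟩
    · intro x hx
      simp only [Finset.mem_product] at hx ⊢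
      exact ⟨hyb_mem hQ hx.1 hx.2 k, hyb_mem hQ hx.2 hx.1 k⟩
    · intro x _
      exact Prod.ext (hyb_hyb_left k x.1 x.2) (hyb_hyb_left k x.2 x.1)
    · intro x _
      exact Prod.ext (hyb_hyb_left k x.1 x.2) (hyb_hyb_left k x.2 x.1)
    · intro x _; rfl
  rw [key, Finset.sum_product]
  simp only [Finset.sum_const, nsmul_eq_mul, mul_comm]
  rw [Finset.sum_mul]

lemma sum_update_slide {d : ℕ} (c : LatticePt d) (m : ℕ) (i : Fin d) (G : LatticePt d → ℝ) :
    ∑ u ∈ subcube d c m, ∑ r ∈ Finset.Icc (c i) (c i + (m : ℤ)), G (Function.update u i r) =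
      ((m : ℝ) + 1) * ∑ u ∈ subcube d c m, G u := by
  set Q := subcube d c m with hQ
  set R := Finset.Icc (c i) (c i + (m : ℤ)) with hR
  rw [← Finset.sum_product']
  have hmemQ : ∀ {u : LatticePt d} {r : ℤ}, u ∈ Q → r ∈ R → Function.update u i r ∈ Q := by
    intro u r hu hr
    rw [hQ, mem_subcube] at hu ⊢
    rw [hR, Finset.mem_Icc] at hr
    intro j
    rcases eq_or_ne j i with rfl | hj
    · simpa using hr
    · simpa [Function.update_of_ne hj] using hu j
  have hmemR : ∀ {u : LatticePt d}, u ∈ Q → u i ∈ R := by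
    intro u hu
    rw [hQ, mem_subcube] at hu
    rw [hR, Finset.mem_Icc]
    exact hu i
  have key : ∑ x ∈ Q ×ˢ R, G (Function.update x.1 i x.2) = ∑ x ∈ Q ×ˢ R, G x.1 := by
    refine Finset.sum_nbij' (i := fun x => (Function.update x.1 i x.2, x.1 i))
      (j := fun x => (Function.update x.1 i x.2, x.1 i)) ?_ ?_ ?_ ?_ ?_
    · intro x hx
      simp only [Finset.mem_product] at hx ⊢
      exact ⟨hmemQ hx.1 hx.2, hmemR hx.1⟩
    · intro x hx
      simp only [Finset.mem_product] at hx ⊢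
      exact ⟨hmemQ hx.1 hx.2, hmemR hx.1⟩
    · intro x _
      refine Prod.ext ?_ ?_
      · simp [Function.update_idem, Function.update_eq_self]
      · simp
    · intro x _
      refine Prod.ext ?_ ?_
      · simp [Function.update_idem, Function.update_eq_self]
      · simp
    · intro x _; rfl
  rw [key, Finset.sum_product]
  have hcard : (R.card : ℝ) = (m : ℝ) + 1 := by
    rw [hR, Int.card_Icc]
    have : ((c i + (m : ℤ) + 1 - c i)).toNat = m + 1 := by omega
    rw [this]; push_cast; ring
  simp only [Finset.sum_const, nsmul_eq_mul]
  rw [← Finset.mul_sum, hcard]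

/-- Key combinatorial bound: double sum of `|f a - f b|` over a subcube. -/
lemma sumA {d : ℕ} (f : LatticePt d → ℝ) (c : LatticePt d) (m : ℕ) :
    ∑ a ∈ subcube d c m, ∑ b ∈ subcube d c m, |f a - f b| ≤
      (d : ℝ) * (((m : ℝ) + 1) * ((subcube d c m).card : ℝ)) *
        ∑ u ∈ subcube d c m, gradLen f u := by
  set Q := subcube d c m with hQ
  have step1 : ∑ a ∈ Q, ∑ b ∈ Q, |f a - f b| ≤
      ∑ a ∈ Q, ∑ b ∈ Q, ∑ k ∈ Finset.range d, |f (hyb k a b) - f (hyb (k + 1) a b)| :=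
    Finset.sum_le_sum fun a _ => Finset.sum_le_sum fun b _ => telescope f a b
  refine step1.trans ?_
  have swap : ∑ a ∈ Q, ∑ b ∈ Q, ∑ k ∈ Finset.range d, |f (hyb k a b) - f (hyb (k + 1) a b)| =
      ∑ k ∈ Finset.range d, ∑ a ∈ Q, ∑ b ∈ Q, |f (hyb k a b) - f (hyb (k + 1) a b)| := by
    calc ∑ a ∈ Q, ∑ b ∈ Q, ∑ k ∈ Finset.range d, |f (hyb k a b) - f (hyb (k + 1) a b)|
        = ∑ a ∈ Q, ∑ k ∈ Finset.range d, ∑ b ∈ Q, |f (hyb k a b) - f (hyb (k + 1) a b)| :=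
          Finset.sum_congr rfl fun a _ => Finset.sum_comm
      _ = ∑ k ∈ Finset.range d, ∑ a ∈ Q, ∑ b ∈ Q, |f (hyb k a b) - f (hyb (k + 1) a b)| :=
          Finset.sum_comm
  rw [swap]
  have perk : ∀ k ∈ Finset.range d, ∑ a ∈ Q, ∑ b ∈ Q, |f (hyb k a b) - f (hyb (k + 1) a b)| ≤
      (Q.card : ℝ) * (((m : ℝ) + 1) * ∑ u ∈ Q, gradLen f u) := by
    intro k hk
    have hkd : k < d := Finset.mem_range.1 hk
    set i : Fin d := ⟨k, hkd⟩ with hi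
    have hstep : ∀ a ∈ Q, ∀ b ∈ Q, |f (hyb k a b) - f (hyb (k + 1) a b)| ≤
        ∑ r ∈ Finset.Icc (c i) (c i + (m : ℤ)), gradLen f (Function.update (hyb k a b) i r) := by
      intro a ha b hb
      have hmema := mem_subcube.1 (hQ ▸ ha) i
      have hmemb := mem_subcube.1 (hQ ▸ hb) i
      have h := step1D f (hyb k a b) i (c i) m (s := a i) (t := b i) hmema hmemb
      have h1 : Function.update (hyb k a b) i (a i) = hyb k a b := by
        have : a i = (hyb k a b) i := (hyb_coord k hkd a b).symm
        rw [this, Function.update_eq_self]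
      have h2 : Function.update (hyb k a b) i (b i) = hyb (k + 1) a b := (hyb_succ k hkd a b).symm
      rwa [h1, h2] at h
    calc ∑ a ∈ Q, ∑ b ∈ Q, |f (hyb k a b) - f (hyb (k + 1) a b)|
        ≤ ∑ a ∈ Q, ∑ b ∈ Q, ∑ r ∈ Finset.Icc (c i) (c i + (m : ℤ)),
            gradLen f (Function.update (hyb k a b) i r) :=
          Finset.sum_le_sum fun a ha => Finset.sum_le_sum fun b hb => hstep a ha b hb
      _ = (Q.card : ℝ) * ∑ u ∈ Q, ∑ r ∈ Finset.Icc (c i) (c i + (m : ℤ)),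
            gradLen f (Function.update u i r) :=
          sum_hyb c m k (fun v => ∑ r ∈ Finset.Icc (c i) (c i + (m : ℤ)),
            gradLen f (Function.update v i r))
      _ = (Q.card : ℝ) * (((m : ℝ) + 1) * ∑ u ∈ Q, gradLen f u) := by
          rw [sum_update_slide c m i (gradLen f)]
  calc ∑ k ∈ Finset.range d, ∑ a ∈ Q, ∑ b ∈ Q, |f (hyb k a b) - f (hyb (k + 1) a b)|
      ≤ ∑ _k ∈ Finset.range d, (Q.card : ℝ) * (((m : ℝ) + 1) * ∑ u ∈ Q, gradLen f u) :=
        Finset.sum_le_sum perk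
    _ = (d : ℝ) * (((m : ℝ) + 1) * (Q.card : ℝ)) * ∑ u ∈ Q, gradLen f u := by
        rw [Finset.sum_const, Finset.card_range, nsmul_eq_mul]; ring

lemma subcube_subset_cube {d n : ℕ} {c : LatticePt d} {m : ℕ}
    (hc : ∀ j, 0 ≤ c j ∧ c j + (m : ℤ) ≤ (n : ℤ)) : subcube d c m ⊆ cube d n := by
  rw [cube_eq_subcube]
  refine Fintype.piFinset_subset _ _ fun j => Finset.Icc_subset_Icc ?_ ?_
  · exact (hc j).1
  · simpa using (hc j).2

lemma lpGradNorm_nonneg (d n : ℕ) (p : ℝ) (f : LatticePt d → ℝ) : 0 ≤ lpGradNorm d n p f :=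
  Real.rpow_nonneg (Finset.sum_nonneg fun u _ => Real.rpow_nonneg (gradLen_nonneg f u) p) _

lemma holderQ {d n : ℕ} {p : ℝ} (hp1 : 1 ≤ p) (f : LatticePt d → ℝ)
    {Q : Finset (LatticePt d)} (hQ : Q ⊆ cube d n) :
    ∑ u ∈ Q, gradLen f u ≤ (Q.card : ℝ) ^ (1 - 1/p) * lpGradNorm d n p f := by
  have hp0 : 0 < p := lt_of_lt_of_le one_pos hp1
  have h := Real.inner_le_weight_mul_Lp_of_nonneg Q hp1 (fun _ => (1 : ℝ)) (gradLen f)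
      (fun _ => zero_le_one) (fun u => gradLen_nonneg f u)
  simp only [one_mul] at h
  have h3 : (∑ _u ∈ Q, (1 : ℝ)) = (Q.card : ℝ) := by
    rw [Finset.sum_const, nsmul_eq_mul, mul_one]
  rw [h3] at h
  refine h.trans ?_
  have h2 : (∑ u ∈ Q, gradLen f u ^ p) ^ (1/p) ≤ lpGradNorm d n p f := by
    rw [lpGradNorm]
    refine Real.rpow_le_rpow
      (Finset.sum_nonneg fun u _ => Real.rpow_nonneg (gradLen_nonneg f u) p) ?_
      (by positivity)
    exact Finset.sum_le_sum_of_subset_of_nonneg hQ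
      (fun u _ _ => Real.rpow_nonneg (gradLen_nonneg f u) p)
  simp only [inv_eq_one_div]
  exact mul_le_mul_of_nonneg_left h2 (Real.rpow_nonneg (Nat.cast_nonneg _) _)

noncomputable def avgc {d : ℕ} (f : LatticePt d → ℝ) (c : LatticePt d) (m : ℕ) : ℝ :=
  (∑ a ∈ subcube d c m, f a) / ((subcube d c m).card : ℝ)

lemma subcube_zero {d : ℕ} (c : LatticePt d) : subcube d c 0 = {c} := by
  ext y
  rw [mem_subcube, Finset.mem_singleton]
  constructor
  · intro h
    funext j
    have := h j
    omega
  · rintro rfl j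
    omega

lemma avgc_zero {d : ℕ} (f : LatticePt d → ℝ) (c : LatticePt d) : avgc f c 0 = f c := by
  rw [avgc, subcube_zero]
  simp

lemma avg_sub_avg {d : ℕ} (f : LatticePt d → ℝ) {Q' Q : Finset (LatticePt d)}
    (h1 : (0 : ℝ) < Q'.card) (h2 : (0 : ℝ) < Q.card) :
    |(∑ a ∈ Q', f a) / (Q'.card : ℝ) - (∑ b ∈ Q, f b) / (Q.card : ℝ)| ≤
      (∑ a ∈ Q', ∑ b ∈ Q, |f a - f b|) / ((Q'.card : ℝ) * (Q.card : ℝ)) := by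
  have key : (∑ a ∈ Q', f a) / (Q'.card : ℝ) - (∑ b ∈ Q, f b) / (Q.card : ℝ) =
      (∑ a ∈ Q', ∑ b ∈ Q, (f a - f b)) / ((Q'.card : ℝ) * (Q.card : ℝ)) := by
    have inner : ∑ a ∈ Q', ∑ b ∈ Q, (f a - f b) =
        (Q.card : ℝ) * ∑ a ∈ Q', f a - (Q'.card : ℝ) * ∑ b ∈ Q, f b := by
      calc ∑ a ∈ Q', ∑ b ∈ Q, (f a - f b)
          = ∑ a ∈ Q', ((Q.card : ℝ) * f a - ∑ b ∈ Q, f b) := by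
            refine Finset.sum_congr rfl fun a _ => ?_
            rw [Finset.sum_sub_distrib, Finset.sum_const, nsmul_eq_mul]
        _ = (Q.card : ℝ) * ∑ a ∈ Q', f a - (Q'.card : ℝ) * ∑ b ∈ Q, f b := by
            rw [Finset.sum_sub_distrib, ← Finset.mul_sum, Finset.sum_const, nsmul_eq_mul]
    rw [inner]
    field_simp
  rw [key, abs_div, abs_of_pos (a := (Q'.card : ℝ) * (Q.card : ℝ)) (by positivity)]
  gcongr
  exact (Finset.abs_sum_le_sum_abs _ _).trans
    (Finset.sum_le_sum fun a _ => Finset.abs_sum_le_sum_abs _ _)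

lemma chainBound {d n : ℕ} (hd : 1 ≤ d) {p : ℝ} (hp : (d : ℝ) < p)
    (f : LatticePt d → ℝ) :
    ∀ m : ℕ, ∀ c : LatticePt d, (∀ j, 0 ≤ c j ∧ c j + (m : ℤ) ≤ (n : ℤ)) →
      ∀ x ∈ subcube d c m,
        |f x - avgc f c m| ≤
          ((d : ℝ) * 2 ^ d / (1 - (2/3 : ℝ) ^ (1 - (d : ℝ) / p))) *
            ((m : ℝ) + 1) ^ (1 - (d : ℝ) / p) * lpGradNorm d n p f := by
  have hd0 : (0 : ℝ) < d := by exact_mod_cast hd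
  have hp0 : (0 : ℝ) < p := lt_trans hd0 hp
  have hp1 : 1 ≤ p := le_trans (by exact_mod_cast hd) hp.le
  set α := 1 - (d : ℝ) / p with hα
  set N := lpGradNorm d n p f with hN
  have hN0 : 0 ≤ N := lpGradNorm_nonneg d n p f
  have hα0 : 0 < α := by
    rw [hα]
    have : (d : ℝ) / p < 1 := (div_lt_one hp0).2 hp
    linarith
  have hα1 : α ≤ 1 := by
    rw [hα]
    have : 0 ≤ (d : ℝ) / p := by positivity
    linarith
  have hρ1 : (2/3 : ℝ) ^ α < 1 := Real.rpow_lt_one (by norm_num) (by norm_num) hα0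
  have hρ0 : (0 : ℝ) ≤ (2/3 : ℝ) ^ α := Real.rpow_nonneg (by norm_num) _
  set K := (d : ℝ) * 2 ^ d / (1 - (2/3 : ℝ) ^ α) with hK
  have hKpos : 0 < K := div_pos (by positivity) (by linarith)
  intro m
  induction m using Nat.strong_induction_on with
  | _ m ih =>
    intro c hc x hx
    rcases Nat.eq_zero_or_pos m with rfl | hm
    · have hx' : x = c := by
        rw [subcube_zero] at hx
        exact Finset.mem_singleton.1 hx
      rw [hx', avgc_zero]
      simp only [sub_self, abs_zero, Nat.cast_zero, zero_add, Real.one_rpow]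
      positivity
    · -- inductive step
      set m' := m / 2 with hm'
      have hm'lt : m' < m := Nat.div_lt_self hm (by norm_num)
      set c' : LatticePt d := fun j => min (x j) (c j + (m : ℤ) - (m' : ℤ)) with hc'
      have hm'm : (m' : ℤ) ≤ (m : ℤ) := by exact_mod_cast Nat.div_le_self m 2
      have hxmem : ∀ j, c j ≤ x j ∧ x j ≤ c j + (m : ℤ) := fun j => mem_subcube.1 hx j
      have hx' : x ∈ subcube d c' m' := by
        rw [mem_subcube]
        intro j
        have := hxmem j
        constructor
        · simp only [hc']; omega
        · simp only [hc']; omega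
      have hc'valid : ∀ j, 0 ≤ c' j ∧ c' j + (m' : ℤ) ≤ (n : ℤ) := by
        intro j
        have h1 := hc j
        have h2 := hxmem j
        constructor
        · simp only [hc']; omega
        · simp only [hc']; omega
      have hsub : subcube d c' m' ⊆ subcube d c m := by
        refine Fintype.piFinset_subset _ _ fun j => Finset.Icc_subset_Icc ?_ ?_
        · have := hxmem j; simp only [hc']; omega
        · have := hxmem j; simp only [hc']; omega
      have ihm := ih m' hm'lt c' hc'valid x hx'
      -- the cross bound
      have hQcard : ((subcube d c m).card : ℝ) = ((m : ℝ) + 1) ^ (d : ℕ) := by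
        rw [card_subcube]; push_cast; ring
      have hQ'card : ((subcube d c' m').card : ℝ) = ((m' : ℝ) + 1) ^ (d : ℕ) := by
        rw [card_subcube]; push_cast; ring
      have hQpos : (0 : ℝ) < ((subcube d c m).card : ℝ) := by
        rw [hQcard]; positivity
      have hQ'pos : (0 : ℝ) < ((subcube d c' m').card : ℝ) := by
        rw [hQ'card]; positivity
      have cross : |avgc f c' m' - avgc f c m| ≤
          (d : ℝ) * 2 ^ d * ((m : ℝ) + 1) ^ α * N := by
        have step1 := avg_sub_avg f hQ'pos hQpos
        have step2 : ∑ a ∈ subcube d c' m', ∑ b ∈ subcube d c m, |f a - f b| ≤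
            ∑ a ∈ subcube d c m, ∑ b ∈ subcube d c m, |f a - f b| :=
          Finset.sum_le_sum_of_subset_of_nonneg hsub
            (fun a _ _ => Finset.sum_nonneg fun b _ => abs_nonneg _)
        have step3 := sumA f c m
        have step4 : ∑ u ∈ subcube d c m, gradLen f u ≤
            (((subcube d c m).card : ℝ)) ^ (1 - 1/p) * N :=
          holderQ hp1 f (subcube_subset_cube hc)
        -- combine
        have hMr2 : ((m : ℝ) + 1) ≤ 2 * ((m' : ℝ) + 1) := by
          have : m ≤ 2 * m' + 1 := by omega
          have : (m : ℝ) ≤ 2 * (m' : ℝ) + 1 := by exact_mod_cast this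
          linarith
        have hcardpow : (((subcube d c m).card : ℝ)) ^ (1 - 1/p) =
            ((m : ℝ) + 1) ^ ((d : ℝ) * (1 - 1/p)) := by
          rw [hQcard, ← Real.rpow_natCast ((m : ℝ) + 1) d, ← Real.rpow_mul (by positivity)]
        have hexp : 1 + (d : ℝ) * (1 - 1/p) = α + (d : ℝ) := by
          rw [hα]; field_simp; ring
        have hmain : ((m : ℝ) + 1) * (((subcube d c m).card : ℝ)) ^ (1 - 1/p) =
            ((m : ℝ) + 1) ^ α * ((m : ℝ) + 1) ^ (d : ℕ) := by
          rw [hcardpow]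
          rw [show ((m : ℝ) + 1) * ((m : ℝ) + 1) ^ ((d : ℝ) * (1 - 1/p)) =
              ((m : ℝ) + 1) ^ (1 : ℝ) * ((m : ℝ) + 1) ^ ((d : ℝ) * (1 - 1/p)) by
            rw [Real.rpow_one]]
          rw [← Real.rpow_add (by positivity), hexp, Real.rpow_add (by positivity),
            Real.rpow_natCast]
        have hMα : (0 : ℝ) ≤ ((m : ℝ) + 1) ^ α := Real.rpow_nonneg (by positivity) _
        have hpow : ((m : ℝ) + 1) ^ (d : ℕ) ≤ 2 ^ (d : ℕ) * ((m' : ℝ) + 1) ^ (d : ℕ) := by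
          calc ((m : ℝ) + 1) ^ (d : ℕ) ≤ (2 * ((m' : ℝ) + 1)) ^ (d : ℕ) :=
                pow_le_pow_left₀ (by positivity) hMr2 d
            _ = 2 ^ (d : ℕ) * ((m' : ℝ) + 1) ^ (d : ℕ) := mul_pow _ _ _
        have hcne : ((subcube d c m).card : ℝ) ≠ 0 := hQpos.ne'
        have hc'ne : ((subcube d c' m').card : ℝ) ≠ 0 := hQ'pos.ne'
        calc |avgc f c' m' - avgc f c m|
            ≤ (∑ a ∈ subcube d c' m', ∑ b ∈ subcube d c m, |f a - f b|) /
              (((subcube d c' m').card : ℝ) * ((subcube d c m).card : ℝ)) := step1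
          _ ≤ ((d : ℝ) * (((m : ℝ) + 1) * ((subcube d c m).card : ℝ)) *
                (((subcube d c m).card : ℝ) ^ (1 - 1/p) * N)) /
              (((subcube d c' m').card : ℝ) * ((subcube d c m).card : ℝ)) := by
              refine (div_le_div_iff_of_pos_right (by positivity)).2 ?_
              exact step2.trans (step3.trans (mul_le_mul_of_nonneg_left step4 (by positivity)))
          _ = (d : ℝ) * (((m : ℝ) + 1) * ((subcube d c m).card : ℝ) ^ (1 - 1/p)) * N /
              ((subcube d c' m').card : ℝ) := by
              field_simp
          _ = (d : ℝ) * (((m : ℝ) + 1) ^ α * ((m : ℝ) + 1) ^ (d : ℕ)) * N /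
              ((subcube d c' m').card : ℝ) := by rw [hmain]
          _ ≤ (d : ℝ) * (((m : ℝ) + 1) ^ α * (2 ^ (d : ℕ) * ((m' : ℝ) + 1) ^ (d : ℕ))) * N /
              ((subcube d c' m').card : ℝ) := by
              have inner : ((m : ℝ) + 1) ^ α * ((m : ℝ) + 1) ^ (d : ℕ) ≤
                  ((m : ℝ) + 1) ^ α * (2 ^ (d : ℕ) * ((m' : ℝ) + 1) ^ (d : ℕ)) :=
                mul_le_mul_of_nonneg_left hpow hMα
              have num : (d : ℝ) * (((m : ℝ) + 1) ^ α * ((m : ℝ) + 1) ^ (d : ℕ)) * N ≤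
                  (d : ℝ) * (((m : ℝ) + 1) ^ α * (2 ^ (d : ℕ) * ((m' : ℝ) + 1) ^ (d : ℕ))) * N :=
                mul_le_mul_of_nonneg_right (mul_le_mul_of_nonneg_left inner hd0.le) hN0
              exact (div_le_div_iff_of_pos_right hQ'pos).2 num
          _ = (d : ℝ) * 2 ^ d * ((m : ℝ) + 1) ^ α * N := by
              rw [hQ'card]
              field_simp
      calc |f x - avgc f c m|
          ≤ |f x - avgc f c' m'| + |avgc f c' m' - avgc f c m| := abs_sub_le _ _ _
        _ ≤ K * ((m' : ℝ) + 1) ^ α * N + (d : ℝ) * 2 ^ d * ((m : ℝ) + 1) ^ α * N :=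
            add_le_add ihm cross
        _ ≤ K * ((m : ℝ) + 1) ^ α * N := by
            have hM' : ((m' : ℝ) + 1) ≤ (2/3) * ((m : ℝ) + 1) := by
              have h3 : 3 * m' + 3 ≤ 2 * m + 2 := by omega
              have : 3 * (m' : ℝ) + 3 ≤ 2 * (m : ℝ) + 2 := by exact_mod_cast h3
              linarith
            have hmono : ((m' : ℝ) + 1) ^ α ≤ (2/3 : ℝ) ^ α * ((m : ℝ) + 1) ^ α := by
              rw [← Real.mul_rpow (by norm_num) (by positivity)]
              exact Real.rpow_le_rpow (by positivity) hM' hα0.le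
            have hKid : K * (2/3 : ℝ) ^ α + (d : ℝ) * 2 ^ d = K := by
              have h1ρ : 1 - (2/3 : ℝ) ^ α ≠ 0 := by linarith
              rw [hK]
              field_simp
              ring
            have hMα : (0 : ℝ) ≤ ((m : ℝ) + 1) ^ α := Real.rpow_nonneg (by positivity) _
            calc K * ((m' : ℝ) + 1) ^ α * N + (d : ℝ) * 2 ^ d * ((m : ℝ) + 1) ^ α * N
                ≤ K * ((2/3 : ℝ) ^ α * ((m : ℝ) + 1) ^ α) * N +
                  (d : ℝ) * 2 ^ d * ((m : ℝ) + 1) ^ α * N := by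
                  refine add_le_add_left (mul_le_mul_of_nonneg_right
                    (mul_le_mul_of_nonneg_left hmono hKpos.le) hN0) _
              _ = (K * (2/3 : ℝ) ^ α + (d : ℝ) * 2 ^ d) * (((m : ℝ) + 1) ^ α * N) := by ring
              _ = K * ((m : ℝ) + 1) ^ α * N := by rw [hKid]; ring

/-- Discrete Morrey inequality for `p > d`. -/
theorem discrete_morrey (d : ℕ) (hd : 1 ≤ d) (p : ℝ) (hp : (d : ℝ) < p) :
    ∃ C : ℝ, ∀ n : ℕ, 1 ≤ n → ∀ f : LatticePt d → ℝ,
      ∀ x ∈ cube d n, ∀ y ∈ cube d n,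
        |f x - f y| ≤ C * (n : ℝ) ^ (1 - (d : ℝ) / p) * lpGradNorm d n p f := by
  have hd0 : (0 : ℝ) < d := by exact_mod_cast hd
  have hp0 : (0 : ℝ) < p := lt_trans hd0 hp
  set α := 1 - (d : ℝ) / p with hα
  have hα0 : 0 < α := by
    rw [hα]
    have : (d : ℝ) / p < 1 := (div_lt_one hp0).2 hp
    linarith
  have hα1 : α ≤ 1 := by
    rw [hα]
    have : 0 ≤ (d : ℝ) / p := by positivity
    linarith
  have hρ1 : (2/3 : ℝ) ^ α < 1 := Real.rpow_lt_one (by norm_num) (by norm_num) hα0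
  set K := (d : ℝ) * 2 ^ d / (1 - (2/3 : ℝ) ^ α) with hK
  have hKpos : 0 < K := div_pos (by positivity) (by linarith)
  refine ⟨4 * K, ?_⟩
  intro n hn f x hx y hy
  set N := lpGradNorm d n p f with hN
  have hN0 : 0 ≤ N := lpGradNorm_nonneg d n p f
  have hvalid : ∀ j, 0 ≤ (0 : LatticePt d) j ∧ (0 : LatticePt d) j + (n : ℤ) ≤ (n : ℤ) := by
    intro j
    simp
  have hx' : x ∈ subcube d (0 : LatticePt d) n := by rwa [← cube_eq_subcube]
  have hy' : y ∈ subcube d (0 : LatticePt d) n := by rwa [← cube_eq_subcube]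
  have hbx := chainBound (n := n) hd hp f n (0 : LatticePt d) hvalid x hx'
  have hby := chainBound (n := n) hd hp f n (0 : LatticePt d) hvalid y hy'
  have hMα : (0 : ℝ) ≤ ((n : ℝ) + 1) ^ α := Real.rpow_nonneg (by positivity) _
  have hnα : (0 : ℝ) ≤ (n : ℝ) ^ α := Real.rpow_nonneg (by positivity) _
  have hpow : ((n : ℝ) + 1) ^ α ≤ 2 * (n : ℝ) ^ α := by
    have hn1 : (1 : ℝ) ≤ (n : ℝ) := by exact_mod_cast hn
    have h1 : ((n : ℝ) + 1) ≤ 2 * (n : ℝ) := by linarith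
    calc ((n : ℝ) + 1) ^ α ≤ (2 * (n : ℝ)) ^ α :=
          Real.rpow_le_rpow (by positivity) h1 hα0.le
      _ = 2 ^ α * (n : ℝ) ^ α := Real.mul_rpow (by norm_num) (by positivity)
      _ ≤ 2 ^ (1 : ℝ) * (n : ℝ) ^ α := by
          refine mul_le_mul_of_nonneg_right ?_ hnα
          exact Real.rpow_le_rpow_of_exponent_le one_le_two hα1
      _ = 2 * (n : ℝ) ^ α := by rw [Real.rpow_one]
  calc |f x - f y|
      ≤ |f x - avgc f 0 n| + |avgc f 0 n - f y| := abs_sub_le _ _ _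
    _ = |f x - avgc f 0 n| + |f y - avgc f 0 n| := by rw [abs_sub_comm (avgc f 0 n)]
    _ ≤ K * ((n : ℝ) + 1) ^ α * N + K * ((n : ℝ) + 1) ^ α * N := add_le_add hbx hby
    _ = 2 * K * (((n : ℝ) + 1) ^ α * N) := by ring
    _ ≤ 2 * K * ((2 * (n : ℝ) ^ α) * N) := by
        refine mul_le_mul_of_nonneg_left (mul_le_mul_of_nonneg_right hpow hN0) (by positivity)
    _ = 4 * K * (n : ℝ) ^ α * N := by ring
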